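/- Cayley–Hamilton theorem for gl_n (first identity): let c_0, c_1, …, c_n ∈ U(gl_n) be the coefficients of the Capelli determinant, so that C(u) = Σ_{j=0}^n c_j u^j for all u ∈ ℂ. Then C(−E + n − 1) = 0, i.e., Σ_{j=0}^n c_j · ((n−1)·1 − E)^j = 0 in the ring of n×n matrices over U(gl_n), where 1 is the identity matrix and c_j acts by entrywise multiplication. -/

import Mathlib

open Polynomial

set_option synthInstance.maxHeartbeats 1000000
set_option maxHeartbeats 2000000

noncomputable section

attribute [local instance 100] LieRing.ofAssociativeRing

abbrev glUEA (n : ℕ) : Type :=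
  UniversalEnvelopingAlgebra ℂ (Matrix (Fin n) (Fin n) ℂ)

noncomputable def Egen (n : ℕ) (i j : Fin n) : glUEA n :=
  UniversalEnvelopingAlgebra.ι ℂ (Matrix.single i j 1)

noncomputable def Emat (n : ℕ) : Matrix (Fin n) (Fin n) (glUEA n) :=
  Matrix.of fun i j => Egen n i j

/-- The entry `(w + E)_{ij} = δ_ij · w + E_ij`. -/
noncomputable def capelliEntry (n : ℕ) (w : ℂ) (i j : Fin n) : glUEA n :=
  (if i = j then algebraMap ℂ (glUEA n) w else 0) + Egen n i j

/-- The Capelli determinant. -/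
noncomputable def capelli (n : ℕ) (u : ℂ) : glUEA n :=
  ∑ σ : Equiv.Perm (Fin n), (Equiv.Perm.sign σ : ℤ) •
    (((List.finRange n).map fun (k : Fin n) =>
        capelliEntry n (u - (k : ℕ)) (σ k) k).prod)

lemma stdBasis_lie (n : ℕ) (i j k l : Fin n) :
    ⁅(Matrix.single i j (1:ℂ) : Matrix (Fin n) (Fin n) ℂ),
      (Matrix.single k l (1:ℂ) : Matrix (Fin n) (Fin n) ℂ)⁆
      = (if k = j then Matrix.single i l (1:ℂ) else 0)
        - (if i = l then Matrix.single k j (1:ℂ) else 0) := by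
  rw [Ring.lie_def]
  by_cases h1 : k = j <;> by_cases h2 : i = l <;>
    simp_all [Matrix.single_mul_single_same, Matrix.single_mul_single_of_ne, Ne.symm]

lemma Egen_comm (n : ℕ) (i j k l : Fin n) :
    Egen n i j * Egen n k l = Egen n k l * Egen n i j
      + ((if k = j then Egen n i l else 0) - (if i = l then Egen n k j else 0)) := by
  have h : Egen n i j * Egen n k l - Egen n k l * Egen n i j
      = (if k = j then Egen n i l else 0) - (if i = l then Egen n k j else 0) := by
    rw [← Ring.lie_def]
    show ⁅UniversalEnvelopingAlgebra.ι ℂ _, UniversalEnvelopingAlgebra.ι ℂ _⁆ = _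
    rw [← LieHom.map_lie, stdBasis_lie]
    by_cases h1 : k = j <;> by_cases h2 : i = l <;> simp [h1, h2, Egen]
  linear_combination (norm := abel) h

abbrev PR (n : ℕ) := Polynomial (glUEA n)

noncomputable def ep (n : ℕ) (i j : Fin n) : PR n := Polynomial.C (Egen n i j)

lemma ep_comm (n : ℕ) (i j k l : Fin n) :
    ep n i j * ep n k l = ep n k l * ep n i j
      + ((if k = j then ep n i l else 0) - (if i = l then ep n k j else 0)) := by
  simp only [ep, ← map_mul]
  rw [Egen_comm n i j k l]
  by_cases h1 : k = j <;> by_cases h2 : i = l <;> simp [h1, h2, Polynomial.C_add, Polynomial.C_sub]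

/-- generic entry with central shift z -/
noncomputable def gE (n : ℕ) (z : PR n) (i j : Fin n) : PR n :=
  (if i = j then z else 0) + ep n i j

lemma gE_key (n : ℕ) (z : PR n) (hz : ∀ x, z * x = x * z) (r s a b : Fin n) :
    gE n z r a * gE n (z - 1) s b - gE n z s b * gE n (z - 1) r a
      - gE n z s a * gE n (z - 1) r b + gE n z r b * gE n (z - 1) s a = 0 := by
  have hz' : ∀ x : PR n, (z - 1) * x = x * (z - 1) := fun x => by
    simp [sub_mul, mul_sub, hz x]
  have hexp : ∀ (i j k l : Fin n),
      gE n z i j * gE n (z - 1) k l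
        = (if i = j then z else 0) * (if k = l then (z-1) else 0)
          + (if i = j then z else 0) * ep n k l
          + (if k = l then (z-1) else 0) * ep n i j
          + ep n i j * ep n k l := by
    intro i j k l
    simp only [gE]
    rw [add_mul, mul_add, mul_add]
    have : ep n i j * (if k = l then (z-1) else 0) = (if k = l then (z-1) else 0) * ep n i j := by
      split <;> simp [(hz' _).symm]
    rw [this]
    abel
  rw [hexp, hexp, hexp, hexp, ep_comm n s b r a, ep_comm n s a r b]
  split_ifs <;> noncomm_ring

noncomputable def Fpp (n : ℕ) (k : ℕ) (i j : Fin n) : PR n :=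
  gE n ((X : PR n) - algebraMap ℂ (PR n) (k : ℂ)) i j

lemma Fpp_succ (n : ℕ) (k : ℕ) (i j : Fin n) :
    Fpp n (k+1) i j = gE n (((X : PR n) - algebraMap ℂ (PR n) (k : ℂ)) - 1) i j := by
  have h : ((k+1:ℕ):ℂ) = (k:ℂ) + 1 := by push_cast; ring
  rw [Fpp, h, map_add, map_one, sub_add_eq_sub_sub]

lemma X_sub_central (n : ℕ) (k : ℕ) (x : PR n) :
    ((X : PR n) - algebraMap ℂ (PR n) (k : ℂ)) * x
      = x * ((X : PR n) - algebraMap ℂ (PR n) (k : ℂ)) := by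
  rw [sub_mul, mul_sub, X_mul, Algebra.commutes]

lemma Fpp_key (n : ℕ) (k : ℕ) (r s a b : Fin n) :
    Fpp n k r a * Fpp n (k+1) s b - Fpp n k s b * Fpp n (k+1) r a
      - Fpp n k s a * Fpp n (k+1) r b + Fpp n k r b * Fpp n (k+1) s a = 0 := by
  simp only [Fpp_succ]
  simp only [Fpp]
  exact gE_key n _ (X_sub_central n k) r s a b

noncomputable def Dp (n : ℕ) (c : Fin n → Fin n) : PR n :=
  ∑ σ : Equiv.Perm (Fin n), (Equiv.Perm.sign σ : ℤ) •
    (((List.finRange n).map fun (t : Fin n) => Fpp n (t : ℕ) (σ t) (c t)).prod)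

lemma finRange_split (n k : ℕ) (hk : k + 1 < n) :
    List.finRange n = (List.finRange n).take k
      ++ (⟨k, by omega⟩ : Fin n) :: (⟨k+1, hk⟩ : Fin n) :: (List.finRange n).drop (k+2) := by
  have h1 : k < (List.finRange n).length := by simp; omega
  have h2 : k+1 < (List.finRange n).length := by simp; omega
  conv_lhs => rw [← List.take_append_drop k (List.finRange n)]
  rw [List.drop_eq_getElem_cons h1, List.drop_eq_getElem_cons h2]
  simp [List.getElem_finRange, Fin.ext_iff]

lemma mem_take_lt (n k : ℕ) (x : Fin n) (hx : x ∈ (List.finRange n).take k) : x.val < k := by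
  rw [List.mem_take_iff_getElem] at hx
  obtain ⟨i, hi, rfl⟩ := hx
  simp [List.getElem_finRange, Fin.ext_iff]
  omega

lemma mem_drop_ge (n k : ℕ) (x : Fin n) (hx : x ∈ (List.finRange n).drop k) : k ≤ x.val := by
  rw [List.mem_drop_iff_getElem] at hx
  obtain ⟨i, hi, rfl⟩ := hx
  simp [List.getElem_finRange, Fin.ext_iff]

lemma Dp_swap_adj (n k : ℕ) (hk : k + 1 < n) (c : Fin n → Fin n) :
    Dp n (c ∘ Equiv.swap ⟨k, by omega⟩ ⟨k+1, hk⟩) = - Dp n c := by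
  set K : Fin n := ⟨k, by omega⟩ with hK
  set K' : Fin n := ⟨k+1, hk⟩ with hK'
  have hKK' : K ≠ K' := by simp [hK, hK', Fin.ext_iff]
  set τ := Equiv.swap K K' with hτ
  have hτfix : ∀ x : Fin n, x ≠ K → x ≠ K' → τ x = x := fun x h1 h2 =>
    Equiv.swap_apply_of_ne_of_ne h1 h2
  have hsplit : ∀ F : Fin n → PR n,
      ((List.finRange n).map F).prod
        = (((List.finRange n).take k).map F).prod
          * (F K * (F K' * (((List.finRange n).drop (k+2)).map F).prod)) := by
    intro F
    conv_lhs => rw [finRange_split n k hk]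
    rw [List.map_append, List.prod_append, List.map_cons, List.prod_cons, List.map_cons,
      List.prod_cons]
  set PA : Equiv.Perm (Fin n) → PR n := fun σ =>
    (((List.finRange n).take k).map fun (t : Fin n) => Fpp n (t : ℕ) (σ t) (c t)).prod with hPA
  set PB : Equiv.Perm (Fin n) → PR n := fun σ =>
    (((List.finRange n).drop (k+2)).map fun (t : Fin n) => Fpp n (t : ℕ) (σ t) (c t)).prod with hPB
  -- congruence for prefix/suffix products
  have hcongA : ∀ (σ : Equiv.Perm (Fin n)) (ρ : Fin n → Fin n) (d : Fin n → Fin n),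
      (∀ x : Fin n, x ≠ K → x ≠ K' → ρ x = σ x ∧ d x = c x) →
      (((List.finRange n).take k).map fun (t : Fin n) => Fpp n (t : ℕ) (ρ t) (d t)).prod
        = PA σ := by
    intro σ ρ d h
    apply congrArg
    apply List.map_congr_left
    intro x hx
    have hlt : x.val < k := mem_take_lt n k x hx
    have h1 : x ≠ K := by simp [hK, Fin.ext_iff]; omega
    have h2 : x ≠ K' := by simp [hK', Fin.ext_iff]; omega
    rw [(h x h1 h2).1, (h x h1 h2).2]
  have hcongB : ∀ (σ : Equiv.Perm (Fin n)) (ρ : Fin n → Fin n) (d : Fin n → Fin n),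
      (∀ x : Fin n, x ≠ K → x ≠ K' → ρ x = σ x ∧ d x = c x) →
      (((List.finRange n).drop (k+2)).map fun (t : Fin n) => Fpp n (t : ℕ) (ρ t) (d t)).prod
        = PB σ := by
    intro σ ρ d h
    apply congrArg
    apply List.map_congr_left
    intro x hx
    have hge : k + 2 ≤ x.val := mem_drop_ge n (k+2) x hx
    have h1 : x ≠ K := by simp [hK, Fin.ext_iff]; omega
    have h2 : x ≠ K' := by simp [hK', Fin.ext_iff]; omega
    rw [(h x h1 h2).1, (h x h1 h2).2]
  have hmt : ∀ (σ : Equiv.Perm (Fin n)) (x : Fin n), x ≠ K → x ≠ K' →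
      (σ * τ) x = σ x ∧ (c ∘ τ) x = c x := by
    intro σ x h1 h2
    constructor
    · simp [Equiv.Perm.mul_apply, hτfix x h1 h2]
    · simp [Function.comp, hτfix x h1 h2]
  have hτK : τ K = K' := Equiv.swap_apply_left _ _
  have hτK' : τ K' = K := Equiv.swap_apply_right _ _
  have hsgn : ∀ σ : Equiv.Perm (Fin n),
      ((Equiv.Perm.sign (σ * τ)) : ℤ) = -((Equiv.Perm.sign σ) : ℤ) := by
    intro σ
    rw [Equiv.Perm.sign_mul, Equiv.Perm.sign_swap hKK']
    simp
  have hKv : (K : ℕ) = k := rfl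
  have hK'v : (K' : ℕ) = k + 1 := rfl
  set W : Fin n → Fin n → PR n := fun r s =>
    Fpp n k r (c K) * Fpp n (k+1) s (c K') - Fpp n k s (c K') * Fpp n (k+1) r (c K) with hW
  set S : PR n := ∑ σ : Equiv.Perm (Fin n), (Equiv.Perm.sign σ : ℤ) •
    (PA σ * (W (σ K) (σ K') * PB σ)) with hS
  have step1 : Dp n (c ∘ τ) + Dp n c = S := by
    have hre : Dp n (c ∘ τ)
        = ∑ σ : Equiv.Perm (Fin n), (Equiv.Perm.sign (σ * τ) : ℤ) •
            (((List.finRange n).map fun (t : Fin n) => Fpp n (t : ℕ) ((σ * τ) t) ((c ∘ τ) t)).prod) := by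
      rw [Dp]
      exact (Equiv.sum_comp (Equiv.mulRight τ)
        (fun π => (Equiv.Perm.sign π : ℤ) •
          (((List.finRange n).map fun (t : Fin n) => Fpp n (t : ℕ) (π t) ((c ∘ τ) t)).prod))).symm
    rw [hre, Dp, ← Finset.sum_add_distrib, hS]
    apply Finset.sum_congr rfl
    intro σ _
    rw [hsplit fun (t : Fin n) => Fpp n (t : ℕ) ((σ * τ) t) ((c ∘ τ) t),
        hsplit fun (t : Fin n) => Fpp n (t : ℕ) (σ t) (c t)]
    rw [hcongA σ _ _ (hmt σ), hcongB σ _ _ (hmt σ)]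
    have hc1 : (c ∘ τ) K = c K' := by simp [Function.comp, hτK]
    have hc2 : (c ∘ τ) K' = c K := by simp [Function.comp, hτK']
    have hs1 : (σ * τ) K = σ K' := by simp [Equiv.Perm.mul_apply, hτK]
    have hs2 : (σ * τ) K' = σ K := by simp [Equiv.Perm.mul_apply, hτK']
    rw [hc1, hc2, hs1, hs2, hsgn σ, hKv, hK'v, hW]
    rw [neg_smul, neg_add_eq_sub, ← smul_sub]
    congr 1
    noncomm_ring
  have step2 : S + S = 0 := by
    have hre : S = ∑ σ : Equiv.Perm (Fin n), (Equiv.Perm.sign (σ * τ) : ℤ) •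
        (PA (σ * τ) * (W ((σ * τ) K) ((σ * τ) K') * PB (σ * τ))) := by
      rw [hS]
      exact (Equiv.sum_comp (Equiv.mulRight τ)
        (fun π => (Equiv.Perm.sign π : ℤ) • (PA π * (W (π K) (π K') * PB π)))).symm
    nth_rewrite 1 [hre]
    rw [hS, ← Finset.sum_add_distrib]
    apply Finset.sum_eq_zero
    intro σ _
    have hs1 : (σ * τ) K = σ K' := by simp [Equiv.Perm.mul_apply, hτK]
    have hs2 : (σ * τ) K' = σ K := by simp [Equiv.Perm.mul_apply, hτK']
    have hA : PA (σ * τ) = PA σ := hcongA σ _ _ (fun x h1 h2 => ⟨(hmt σ x h1 h2).1, rfl⟩)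
    have hB : PB (σ * τ) = PB σ := hcongB σ _ _ (fun x h1 h2 => ⟨(hmt σ x h1 h2).1, rfl⟩)
    rw [hs1, hs2, hA, hB, hsgn σ, neg_smul, neg_add_eq_sub, ← smul_sub]
    convert smul_zero _ using 2
    have hWW : W (σ K) (σ K') - W (σ K') (σ K) = 0 := by
      rw [hW]
      have h := Fpp_key n k (σ K) (σ K') (c K) (c K')
      linear_combination (norm := noncomm_ring) h
    calc PA σ * (W (σ K) (σ K') * PB σ) - PA σ * (W (σ K') (σ K) * PB σ)
        = PA σ * ((W (σ K) (σ K') - W (σ K') (σ K)) * PB σ) := by noncomm_ring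
      _ = 0 := by rw [hWW]; simp
  have h2S : (2:ℂ) • S = 0 := by rw [two_smul]; exact step2
  have hS0 : S = 0 := by
    rcases smul_eq_zero.mp h2S with h | h
    · exact absurd h (by norm_num)
    · exact h
  rw [hS0] at step1
  linear_combination (norm := abel) step1


lemma Dp_swap_lt (n : ℕ) : ∀ (d : ℕ) (x y : Fin n), x.val < y.val → y.val - x.val = d →
    ∀ c : Fin n → Fin n, Dp n (c ∘ Equiv.swap x y) = - Dp n c := by
  intro d
  induction d using Nat.strong_induction_on with
  | _ d ih =>
    intro x y hlt hd c
    rcases eq_or_lt_of_le (Nat.succ_le_of_lt hlt) with h1 | h1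
    · -- adjacent
      have hk : x.val + 1 < n := by omega
      have hy : y = ⟨x.val + 1, hk⟩ := by
        apply Fin.ext
        simp only [Fin.val_mk]
        omega
      rw [hy]
      exact Dp_swap_adj n x.val hk c
    · -- distance ≥ 2
      set y' : Fin n := ⟨y.val - 1, by omega⟩ with hy'
      have hy'v : y'.val = y.val - 1 := rfl
      have hk : y'.val + 1 < n := by omega
      have hyy' : y = ⟨y'.val + 1, hk⟩ := Fin.ext (by simp [hy'v]; omega)
      have hxy' : x.val < y'.val := by omega
      have hconj : Equiv.swap x y
          = Equiv.swap y' y * Equiv.swap x y' * Equiv.swap y' y := by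
        have hfx : Equiv.swap y' y x = x := by
          apply Equiv.swap_apply_of_ne_of_ne
          · exact Fin.ne_of_lt (Fin.lt_def.mpr hxy')
          · exact Fin.ne_of_lt (Fin.lt_def.mpr hlt)
        have hfy' : Equiv.swap y' y y' = y := Equiv.swap_apply_left _ _
        calc Equiv.swap x y = Equiv.swap (Equiv.swap y' y x) (Equiv.swap y' y y') := by
              rw [hfx, hfy']
          _ = Equiv.swap y' y * Equiv.swap x y' * (Equiv.swap y' y)⁻¹ := by
              rw [Equiv.swap_apply_apply]
          _ = Equiv.swap y' y * Equiv.swap x y' * Equiv.swap y' y := by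
              rw [Equiv.swap_inv]
      rw [hconj]
      have hcomp : c ∘ ⇑(Equiv.swap y' y * Equiv.swap x y' * Equiv.swap y' y)
          = ((c ∘ ⇑(Equiv.swap y' y)) ∘ ⇑(Equiv.swap x y')) ∘ ⇑(Equiv.swap y' y) := by
        ext t; simp [Equiv.Perm.mul_apply, Function.comp]
      rw [hcomp]
      have adj1 : ∀ c' : Fin n → Fin n, Dp n (c' ∘ ⇑(Equiv.swap y' y)) = - Dp n c' := by
        intro c'
        have h5 := Dp_swap_adj n y'.val hk c'
        rw [← hyy'] at h5
        convert h5 using 3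
      rw [adj1, ih (d-1) (by omega) x y' hxy' (by omega), adj1]
      simp

lemma Dp_swap (n : ℕ) (x y : Fin n) (hxy : x ≠ y) (c : Fin n → Fin n) :
    Dp n (c ∘ Equiv.swap x y) = - Dp n c := by
  rcases lt_trichotomy x.val y.val with h | h | h
  · exact Dp_swap_lt n _ x y h rfl c
  · exact absurd (Fin.ext h) hxy
  · rw [Equiv.swap_comm]
    exact Dp_swap_lt n _ y x h rfl c

lemma Dp_perm (n : ℕ) (π : Equiv.Perm (Fin n)) :
    ∀ c : Fin n → Fin n, Dp n (c ∘ ⇑π) = (Equiv.Perm.sign π : ℤ) • Dp n c := by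
  refine Equiv.Perm.swap_induction_on π ?_ ?_
  · intro c; simp
  · intro f x y hxy ih c
    have hcomp : c ∘ ⇑(Equiv.swap x y * f) = (c ∘ ⇑(Equiv.swap x y)) ∘ ⇑f := by
      ext t; simp [Equiv.Perm.mul_apply, Function.comp]
    rw [hcomp, ih, Dp_swap n x y hxy c, Equiv.Perm.sign_mul, Equiv.Perm.sign_swap hxy]
    simp

lemma Dp_repeat (n : ℕ) (c : Fin n → Fin n) (x y : Fin n) (hxy : x ≠ y)
    (hc : c x = c y) : Dp n c = 0 := by
  have h1 : c ∘ ⇑(Equiv.swap x y) = c := by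
    ext t
    rcases eq_or_ne t x with rfl | htx
    · simp [Function.comp, Equiv.swap_apply_left, hc]
    rcases eq_or_ne t y with rfl | hty
    · simp [Function.comp, Equiv.swap_apply_right, hc]
    · simp [Function.comp, Equiv.swap_apply_of_ne_of_ne htx hty]
  have h2 := Dp_swap n x y hxy c
  rw [h1] at h2
  have h3 : (2:ℂ) • Dp n c = 0 := by
    rw [two_smul]
    linear_combination (norm := abel) h2
  rcases smul_eq_zero.mp h3 with h | h
  · exact absurd h (by norm_num)
  · exact h

lemma finRange_snoc (m : ℕ) :
    List.finRange (m+1) = ((List.finRange m).map Fin.castSucc) ++ [Fin.last m] := by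
  apply List.ext_getElem
  · simp
  · intro i h1 h2
    simp only [List.getElem_finRange, List.getElem_append, List.length_map, List.length_finRange]
    split
    · next h => simp [List.getElem_finRange, Fin.ext_iff]
    · next h =>
      have : i = m := by simp at h1; omega
      subst this
      simp [Fin.ext_iff]

noncomputable def Acoef (m : ℕ) (c : Fin (m+1) → Fin (m+1)) (i : Fin (m+1)) : PR (m+1) :=
  ∑ σ ∈ Finset.univ.filter (fun σ : Equiv.Perm (Fin (m+1)) => σ (Fin.last m) = i),
    (Equiv.Perm.sign σ : ℤ) • (((List.finRange m).map fun (t : Fin m) =>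
      Fpp (m+1) (t : ℕ) (σ t.castSucc) (c t.castSucc)).prod)

lemma Dp_expand (m : ℕ) (c : Fin (m+1) → Fin (m+1)) :
    Dp (m+1) c = ∑ i : Fin (m+1), Acoef m c i * Fpp (m+1) m i (c (Fin.last m)) := by
  rw [Dp]
  rw [← Finset.sum_fiberwise Finset.univ (fun σ : Equiv.Perm (Fin (m+1)) => σ (Fin.last m))
    (fun σ => (Equiv.Perm.sign σ : ℤ) •
      (((List.finRange (m+1)).map fun (t : Fin (m+1)) => Fpp (m+1) (t : ℕ) (σ t) (c t)).prod))]
  apply Finset.sum_congr rfl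
  intro i _
  rw [Acoef, Finset.sum_mul]
  apply Finset.sum_congr rfl
  intro σ hσ
  have hσi : σ (Fin.last m) = i := (Finset.mem_filter.mp hσ).2
  have hprod : ((List.finRange (m+1)).map fun (t : Fin (m+1)) => Fpp (m+1) (t : ℕ) (σ t) (c t)).prod
      = (((List.finRange m).map fun (t : Fin m) =>
          Fpp (m+1) (t : ℕ) (σ t.castSucc) (c t.castSucc)).prod)
        * Fpp (m+1) m (σ (Fin.last m)) (c (Fin.last m)) := by
    rw [finRange_snoc m, List.map_append, List.prod_append, List.map_map]
    simp [Function.comp_def, Fin.coe_castSucc, Fin.val_last]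
  rw [hprod, hσi, smul_mul_assoc]

lemma Acoef_update (m : ℕ) (c : Fin (m+1) → Fin (m+1)) (q : Fin (m+1)) (i : Fin (m+1)) :
    Acoef m (Function.update c (Fin.last m) q) i = Acoef m c i := by
  rw [Acoef, Acoef]
  apply Finset.sum_congr rfl
  intro σ _
  refine congrArg _ (congrArg List.prod (List.map_congr_left fun t _ => ?_))
  rw [Function.update_of_ne (Fin.ne_of_lt (Fin.castSucc_lt_last t))]

lemma row_identity (m : ℕ) (p q : Fin (m+1)) :
    ∑ i : Fin (m+1),
      ((Equiv.Perm.sign (Equiv.swap (Fin.last m) p) : ℤ) •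
        Acoef m (⇑(Equiv.swap (Fin.last m) p)) i) * Fpp (m+1) m i q
      = if p = q then Dp (m+1) id else 0 := by
  set π := Equiv.swap (Fin.last m) p with hπ
  set cq := Function.update (⇑π) (Fin.last m) q with hcq
  have hlast : cq (Fin.last m) = q := Function.update_self _ _ _
  have hsum : ∑ i : Fin (m+1),
      ((Equiv.Perm.sign π : ℤ) • Acoef m (⇑π) i) * Fpp (m+1) m i q
      = (Equiv.Perm.sign π : ℤ) • Dp (m+1) cq := by
    rw [Dp_expand m cq, hlast, Finset.smul_sum]
    apply Finset.sum_congr rfl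
    intro i _
    rw [hcq, Acoef_update, smul_mul_assoc]
  rw [hsum]
  rcases eq_or_ne p q with rfl | hpq
  · have hcqπ : cq = ⇑π := by
      ext t
      rcases eq_or_ne t (Fin.last m) with rfl | ht
      · rw [hlast, hπ, Equiv.swap_apply_left]
      · rw [hcq, Function.update_of_ne ht]
    have : Dp (m+1) cq = (Equiv.Perm.sign π : ℤ) • Dp (m+1) id := by
      rw [hcqπ]
      have := Dp_perm (m+1) π id
      simpa using this
    rw [this, if_pos rfl, smul_smul]
    rcases Int.units_eq_one_or (Equiv.Perm.sign π) with h | h <;> rw [h] <;> norm_num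
  · rw [if_neg hpq]
    have hx : π q ≠ Fin.last m := by
      intro h
      apply hpq
      have : q = π (Fin.last m) := by
        rw [← h, hπ, Equiv.swap_apply_self]
      rw [this, hπ, Equiv.swap_apply_left]
    have hrep : cq (π q) = cq (Fin.last m) := by
      rw [hlast, hcq, Function.update_of_ne hx]
      exact Equiv.swap_apply_self _ _ _
    rw [Dp_repeat (m+1) cq (π q) (Fin.last m) hx hrep, smul_zero]

-- evaluation at central point
noncomputable def ev (n : ℕ) (u : ℂ) : PR n →+* glUEA n :=
  Polynomial.eval₂RingHom' (RingHom.id (glUEA n)) (algebraMap ℂ (glUEA n) u)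
    (fun a => (Algebra.commutes u a).symm)

lemma ev_C (n : ℕ) (u : ℂ) (r : glUEA n) : ev n u (Polynomial.C r) = r := by
  show Polynomial.eval₂ (RingHom.id _) (algebraMap ℂ (glUEA n) u) (Polynomial.C r) = _
  simp

lemma ev_X (n : ℕ) (u : ℂ) : ev n u (X : PR n) = algebraMap ℂ (glUEA n) u := by
  show Polynomial.eval₂ (RingHom.id _) (algebraMap ℂ (glUEA n) u) (X : PR n) = _
  simp

lemma ev_algebraMap (n : ℕ) (u w : ℂ) :
    ev n u (algebraMap ℂ (PR n) w) = algebraMap ℂ (glUEA n) w := by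
  rw [Polynomial.algebraMap_apply, ev_C]

lemma ev_Fpp (n : ℕ) (u : ℂ) (k : ℕ) (i j : Fin n) :
    ev n u (Fpp n k i j) = capelliEntry n (u - k) i j := by
  rw [Fpp, gE, capelliEntry, map_add, apply_ite (ev n u), map_sub, ev_X, ev_algebraMap, map_zero,
    ep, ev_C, map_sub]

lemma ev_Dp (n : ℕ) (u : ℂ) : ev n u (Dp n id) = capelli n u := by
  rw [Dp, capelli, map_sum]
  apply Finset.sum_congr rfl
  intro σ _
  rw [map_zsmul, map_list_prod, List.map_map]
  congr 1
  apply congrArg List.prod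
  apply List.map_congr_left
  intro t _
  simp only [Function.comp_apply, ev_Fpp, id_eq]

-- degree bounds
lemma Fpp_natDegree_le (n : ℕ) (k : ℕ) (i j : Fin n) : (Fpp n k i j).natDegree ≤ 1 := by
  rw [Fpp, gE]
  apply le_trans (Polynomial.natDegree_add_le _ _)
  simp only [ep, Polynomial.natDegree_C, max_le_iff]
  constructor
  · split
    · rw [Polynomial.algebraMap_apply]
      exact le_trans (Polynomial.natDegree_sub_le _ _)
        (by simp [Polynomial.natDegree_X_le])
    · simp
  · simp

lemma prod_natDegree_le (n : ℕ) {α : Type*} (l : List α) (f : α → PR n)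
    (hf : ∀ t, (f t).natDegree ≤ 1) : ((l.map f).prod).natDegree ≤ l.length := by
  have h1 : ∀ x ∈ (l.map f).map Polynomial.natDegree, x ≤ 1 := by
    intro x hx
    simp only [List.mem_map] at hx
    obtain ⟨q, ⟨t, _, rfl⟩, rfl⟩ := hx
    exact hf t
  refine le_trans (Polynomial.natDegree_list_prod_le _) (le_trans (List.sum_le_card_nsmul _ 1 h1) ?_)
  simp only [List.length_map, smul_eq_mul, mul_one, le_refl]

lemma Dp_natDegree_le (n : ℕ) (c : Fin n → Fin n) : (Dp n c).natDegree ≤ n := by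
  rw [Dp]
  refine Polynomial.natDegree_sum_le_of_forall_le Finset.univ _ fun σ _ => ?_
  rw [zsmul_eq_mul]
  refine le_trans (Polynomial.natDegree_mul_le) ?_
  rw [Polynomial.natDegree_intCast, zero_add]
  refine le_trans (prod_natDegree_le n _ _ (fun t => Fpp_natDegree_le n (t:ℕ) (σ t) (c t))) ?_
  simp

-- vanishing lemma
lemma poly_vanish {M : Type*} [AddCommGroup M] [Module ℂ M] (d : ℕ) (a : ℕ → M)
    (h : ∀ u : ℂ, ∑ j ∈ Finset.range d, u ^ j • a j = 0) : ∀ j, j < d → a j = 0 := by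
  intro j hj
  rw [← Module.forall_dual_apply_eq_zero_iff ℂ]
  intro φ
  set p : Polynomial ℂ := ∑ k ∈ Finset.range d, Polynomial.C (φ (a k)) * X ^ k with hp
  have heval : ∀ u : ℂ, p.eval u = 0 := by
    intro u
    rw [hp]
    simp only [Polynomial.eval_finset_sum, Polynomial.eval_mul, Polynomial.eval_C,
      Polynomial.eval_pow, Polynomial.eval_X]
    have := congrArg φ (h u)
    rw [map_sum, map_zero] at this
    simpa [map_smul, smul_eq_mul, mul_comm] using this
  have hp0 : p = 0 := by
    apply Polynomial.funext
    intro r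
    rw [heval r, Polynomial.eval_zero]
  have : p.coeff j = φ (a j) := by
    rw [hp, Polynomial.finset_sum_coeff]
    simp only [Polynomial.coeff_C_mul_X_pow]
    rw [Finset.sum_ite_eq (Finset.range d) j (fun k => φ (a k))]
    simp [Finset.mem_range.mpr hj]
  rw [hp0] at this
  simpa using this.symm

-- eval as sum of coefficients
lemma ev_eq_sum (n : ℕ) (u : ℂ) (p : PR n) (d : ℕ) (hd : p.natDegree < d) :
    ev n u p = ∑ j ∈ Finset.range d, u ^ j • p.coeff j := by
  show Polynomial.eval₂ (RingHom.id _) (algebraMap ℂ (glUEA n) u) p = _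
  rw [Polynomial.eval₂_eq_sum_range' (RingHom.id _) hd]
  apply Finset.sum_congr rfl
  intro j _
  rw [RingHom.id_apply, ← map_pow, ← Algebra.commutes (u^j), ← Algebra.smul_def]

-- Acoef degree bound (mirrors Dp)
lemma Acoef_natDegree_le (m : ℕ) (c : Fin (m+1) → Fin (m+1)) (i : Fin (m+1)) :
    (Acoef m c i).natDegree ≤ m := by
  rw [Acoef]
  refine Polynomial.natDegree_sum_le_of_forall_le _ _ fun σ _ => ?_
  rw [zsmul_eq_mul]
  refine le_trans (Polynomial.natDegree_mul_le) ?_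
  rw [Polynomial.natDegree_intCast, zero_add]
  refine le_trans (prod_natDegree_le (m+1) (List.finRange m)
    (fun t : Fin m => Fpp (m+1) (t : ℕ) (σ t.castSucc) (c t.castSucc))
    (fun t => Fpp_natDegree_le (m+1) (t:ℕ) (σ t.castSucc) (c t.castSucc))) ?_
  simp

/-- Cayley–Hamilton for `gl_n` (first identity): `C(−E + n − 1) = 0`. -/
theorem stmt10 (n : ℕ) (c : ℕ → glUEA n)
    (hc : ∀ u : ℂ, capelli n u = ∑ j ∈ Finset.range (n + 1), u ^ j • c j) :
    ∑ j ∈ Finset.range (n + 1),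
        c j • (((n : ℂ) - 1) • (1 : Matrix (Fin n) (Fin n) (glUEA n)) - Emat n) ^ j
      = 0 := by
  cases n with
  | zero => exact Subsingleton.elim _ _
  | succ m =>
  set Cp : PR (m+1) := Dp (m+1) id with hCp
  set G : Fin (m+1) → Fin (m+1) → PR (m+1) := fun p i =>
    (Equiv.Perm.sign (Equiv.swap (Fin.last m) p) : ℤ) •
      Acoef m (⇑(Equiv.swap (Fin.last m) p)) i with hG
  set B : ℕ → Matrix (Fin (m+1)) (Fin (m+1)) (glUEA (m+1)) := fun j =>
    Matrix.of fun p i => (G p i).coeff j with hB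
  set K : Matrix (Fin (m+1)) (Fin (m+1)) (glUEA (m+1)) := Matrix.of fun i q =>
    Egen (m+1) i q - (if i = q then algebraMap ℂ (glUEA (m+1)) (m : ℂ) else 0) with hK
  set M : Matrix (Fin (m+1)) (Fin (m+1)) (glUEA (m+1)) :=
    (((m+1 : ℕ) : ℂ) - 1) • (1 : Matrix (Fin (m+1)) (Fin (m+1)) (glUEA (m+1))) - Emat (m+1) with hM
  have hFpp_dec : ∀ i q : Fin (m+1), Fpp (m+1) m i q
      = (if i = q then (X : PR (m+1)) else 0) + Polynomial.C (K i q) := by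
    intro i q
    rw [Fpp, gE, ep, hK]
    by_cases h : i = q
    · simp only [if_pos h, Matrix.of_apply, if_pos h]
      rw [Polynomial.algebraMap_apply, Polynomial.C_sub]
      abel
    · simp only [if_neg h, Matrix.of_apply, if_neg h]
      rw [Polynomial.C_sub]
      simp
  have h1 : ∀ p q : Fin (m+1), ∑ i : Fin (m+1), G p i * Fpp (m+1) m i q
      = if p = q then Cp else 0 := fun p q => row_identity m p q
  have h2 : ∀ (j : ℕ) (p q : Fin (m+1)),
      (if p = q then Cp.coeff j else 0)
        = ∑ i : Fin (m+1), ((if i = q then (G p i * X).coeff j else 0)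
            + (G p i).coeff j * K i q) := by
    intro j p q
    have h3 := congrArg (fun pp : PR (m+1) => pp.coeff j) (h1 p q)
    rw [apply_ite (fun pp : PR (m+1) => pp.coeff j), Polynomial.coeff_zero] at h3
    rw [← h3, Polynomial.finset_sum_coeff]
    apply Finset.sum_congr rfl
    intro i _
    rw [hFpp_dec i q, mul_add, mul_ite, mul_zero, Polynomial.coeff_add,
      apply_ite (fun pp : PR (m+1) => pp.coeff j), Polynomial.coeff_zero, Polynomial.coeff_mul_C]
  have hrec0 : Cp.coeff 0 • (1 : Matrix (Fin (m+1)) (Fin (m+1)) (glUEA (m+1))) = B 0 * K := by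
    ext p q
    rw [Matrix.smul_apply, Matrix.one_apply, smul_eq_mul, mul_ite, mul_one, mul_zero,
      Matrix.mul_apply, h2 0 p q]
    apply Finset.sum_congr rfl
    intro i _
    simp [hB, Polynomial.coeff_mul_X_zero]
  have hrecS : ∀ j : ℕ, Cp.coeff (j+1) • (1 : Matrix (Fin (m+1)) (Fin (m+1)) (glUEA (m+1)))
      = B j + B (j+1) * K := by
    intro j
    ext p q
    rw [Matrix.smul_apply, Matrix.one_apply, smul_eq_mul, mul_ite, mul_one, mul_zero,
      Matrix.add_apply, Matrix.mul_apply, h2 (j+1) p q, Finset.sum_add_distrib]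
    congr 1
    · have h4 : ∀ i : Fin (m+1), (if i = q then (G p i * X).coeff (j+1) else 0)
          = (if i = q then (G p i).coeff j else 0) := by
        intro i; split
        · rw [Polynomial.coeff_mul_X]
        · rfl
      rw [Finset.sum_congr rfl (fun i _ => h4 i), Finset.sum_ite_eq' Finset.univ q]
      simp [hB]
    all_goals try (apply Finset.sum_congr rfl; intro i _; simp [hB])
  have hBv : B (m+1) = 0 := by
    ext p i
    rw [hB]
    simp only [Matrix.of_apply, Matrix.zero_apply]
    apply Polynomial.coeff_eq_zero_of_natDegree_lt
    rw [hG]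
    simp only
    refine lt_of_le_of_lt ?_ (Nat.lt_succ_self m)
    rw [zsmul_eq_mul]
    refine le_trans Polynomial.natDegree_mul_le ?_
    rw [Polynomial.natDegree_intCast, zero_add]
    exact Acoef_natDegree_le m _ i
  have hcj : ∀ j, j < m + 1 + 1 → c j = Cp.coeff j := by
    have hvan := poly_vanish (m+1+1) (fun j => c j - Cp.coeff j) ?_
    · intro j hj
      have h5 := hvan j hj
      simpa [sub_eq_zero] using h5
    · intro u
      have e1 : capelli (m+1) u = ∑ j ∈ Finset.range (m+1+1), u ^ j • Cp.coeff j := by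
        rw [← ev_Dp (m+1) u, ← hCp]
        exact ev_eq_sum (m+1) u Cp (m+1+1)
          (lt_of_le_of_lt (Dp_natDegree_le (m+1) id) (Nat.lt_succ_self (m+1)))
      rw [hc u] at e1
      calc ∑ j ∈ Finset.range (m+1+1), u ^ j • (c j - Cp.coeff j)
          = ∑ j ∈ Finset.range (m+1+1), (u ^ j • c j - u ^ j • Cp.coeff j) := by
            apply Finset.sum_congr rfl; intro j _; rw [smul_sub]
        _ = ∑ j ∈ Finset.range (m+1+1), u ^ j • c j
              - ∑ j ∈ Finset.range (m+1+1), u ^ j • Cp.coeff j := Finset.sum_sub_distrib _ _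
        _ = 0 := by rw [← e1]; exact sub_self _
  have hKM : K = -M := by
    rw [hK, hM]
    ext i q
    simp only [Matrix.of_apply, Matrix.neg_apply, Matrix.sub_apply, Matrix.smul_apply,
      Matrix.one_apply, Emat, Matrix.of_apply, smul_ite, smul_zero]
    have hm2 : algebraMap ℂ (glUEA (m+1)) (m : ℂ)
        = (((m+1 : ℕ) : ℂ) - 1) • (1 : glUEA (m+1)) := by
      rw [show ((m : ℕ) : ℂ) = ((m+1 : ℕ) : ℂ) - 1 by push_cast; ring,
        Algebra.algebraMap_eq_smul_one]
    by_cases h : i = q <;> simp [h, hm2] <;> abel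
  set T : ℕ → Matrix (Fin (m+1)) (Fin (m+1)) (glUEA (m+1)) := fun j => B j * M ^ (j+1) with hT
  calc ∑ j ∈ Finset.range (m + 1 + 1), c j • M ^ j
      = ∑ j ∈ Finset.range (m + 2),
          (Cp.coeff j • (1 : Matrix (Fin (m+1)) (Fin (m+1)) (glUEA (m+1)))) * M ^ j := by
        apply Finset.sum_congr rfl
        intro j hj
        rw [hcj j (Finset.mem_range.mp hj), Matrix.smul_mul, one_mul]
    _ = (Cp.coeff 0 • (1 : Matrix (Fin (m+1)) (Fin (m+1)) (glUEA (m+1)))) * M ^ 0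
          + ∑ j ∈ Finset.range (m+1),
              (Cp.coeff (j+1) • (1 : Matrix (Fin (m+1)) (Fin (m+1)) (glUEA (m+1)))) * M ^ (j+1) := by
        rw [Finset.sum_range_succ']
        exact add_comm _ _
    _ = - T 0 + ∑ j ∈ Finset.range (m+1), (T j - T (j+1)) := by
        congr 1
        · rw [hrec0, pow_zero, mul_one, hKM, hT]
          simp only
          rw [Matrix.mul_neg, pow_one]
        · apply Finset.sum_congr rfl
          intro j _
          rw [hrecS j, add_mul, hKM, hT]
          simp only
          rw [mul_assoc, Matrix.neg_mul, Matrix.mul_neg, ← pow_succ']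
          abel
    _ = - T 0 + (T 0 - T (m+1)) := by rw [Finset.sum_range_sub']
    _ = - T (m+1) := by abel
    _ = 0 := by rw [hT]; simp only; rw [hBv]; simp
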